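/- (Cheap version of the Kabatjanskii–Levenstein bound.) Let x_1, …, x_m be unit vectors in R^d such that |x_i' x_j| ≤ A d^{−1/2} for all i ≠ j, for some A with 1/2 ≤ A ≤ (1/2)√d. Then m ≤ (C d / A²)^{C A²} for some universal constant C. -/

import Mathlib

open MeasureTheory ProbabilityTheory Filter Finset

noncomputable section

namespace SvS

/-- The `i`-th standard unit (weighting) vector. -/
def unitVec (i : ℕ) : ℕ → ℝ := fun ν => if ν = i then 1 else 0

/-- The high-dimensional linear-process time series model of Steland and von Sachs:
dimension `d n`, linear process coefficients `c n j ν`, innovations `ε`,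
decay parameter `θ` and moment parameter `δ`, on a probability space with measure `P`. -/
structure Model (Ω : Type) [MeasurableSpace Ω] where
  P : Measure Ω
  d : ℕ → ℕ
  c : ℕ → ℕ → ℕ → ℝ
  ε : ℤ → Ω → ℝ
  θ : ℝ
  δ : ℝ

variable {Ω : Type} [MeasurableSpace Ω]

/-- Generic centered partial-sum bilinear form
`D_{nk}(v,w) = v' (Σ̂_{nk} − E Σ̂_{nk}) w` for an arbitrary array `Yg`. -/
def Dgen (P : Measure Ω) (d : ℕ → ℕ) (Yg : ℕ → ℤ → ℕ → Ω → ℝ)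
    (n : ℕ) (v w : ℕ → ℝ) (k : ℕ) (ω : Ω) : ℝ :=
  ∑ ν ∈ range (d n), ∑ μ ∈ range (d n), v ν * w μ *
    ∑ i ∈ Icc 1 k, (Yg n i ν ω * Yg n i μ ω - ∫ ω', Yg n i ν ω' * Yg n i μ ω' ∂P)

/-- Generic weighted average of centered cross bilinear forms
`D_k = Σ_{n,m} λ_n λ_m Σ_{ρ,σ} μ_ρ μ_σ v_n^{(ρ)}' (Σ̂_{nmk} − E Σ̂_{nmk}) w_m^{(σ)}`. -/
def DcrossGen (P : Measure Ω) (d : ℕ → ℕ) (Yg : ℕ → ℤ → ℕ → Ω → ℝ)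
    (lamw muw : ℕ → ℝ) (L : ℕ → ℕ) (v w : ℕ → ℕ → ℕ → ℝ) (k : ℕ) (ω : Ω) : ℝ :=
  ∑' n : ℕ, ∑' m : ℕ, lamw n * lamw m *
    ∑ ρ ∈ range (L n), ∑ σ ∈ range (L m), muw ρ * muw σ *
      ∑ i ∈ Icc 1 k,
        ((∑ ν ∈ range (d n), v n ρ ν * Yg n i ν ω) *
            (∑ ν ∈ range (d m), w m σ ν * Yg m i ν ω)
          - ∫ ω', (∑ ν ∈ range (d n), v n ρ ν * Yg n i ν ω') *
              (∑ ν ∈ range (d m), w m σ ν * Yg m i ν ω') ∂P)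

namespace Model

variable (M : Model Ω)

/-- The coordinate processes `Y_{ni}^{(ν)} = Σ_{j≥0} c_{nj}^{(ν)} ε_{i−j}`. -/
def Y (n : ℕ) (i : ℤ) (ν : ℕ) (ω : Ω) : ℝ := ∑' j : ℕ, M.c n j ν * M.ε (i - (j : ℤ)) ω

/-- The projected time series `v' Y_{ni}`. -/
def Yproj (n : ℕ) (v : ℕ → ℝ) (i : ℤ) (ω : Ω) : ℝ :=
  ∑ ν ∈ range (M.d n), v ν * M.Y n i ν ω

/-- The centered products `ξ_i^{(n)}(v,w) = (v'Y_{ni})(w'Y_{ni}) − E[(v'Y_{ni})(w'Y_{ni})]`. -/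
def xi (n : ℕ) (v w : ℕ → ℝ) (i : ℤ) (ω : Ω) : ℝ :=
  M.Yproj n v i ω * M.Yproj n w i ω - ∫ ω', M.Yproj n v i ω' * M.Yproj n w i ω' ∂M.P

/-- `D_{nk}(v,w) = v'(Σ̂_{nk} − E Σ̂_{nk})w`. -/
def D (n : ℕ) (v w : ℕ → ℝ) (k : ℕ) (ω : Ω) : ℝ :=
  Dgen M.P M.d M.Y n v w k ω

/-- `σ_k² = E(ε_k²)`. -/
def σ2 (k : ℤ) : ℝ := ∫ ω, (M.ε k ω) ^ 2 ∂M.P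

/-- `γ_k = E(ε_k⁴)`. -/
def γ4 (k : ℤ) : ℝ := ∫ ω, (M.ε k ω) ^ 4 ∂M.P

/-- The filtration `F_m = σ(ε_i : i ≤ m)`. -/
def filt (m : ℤ) : MeasurableSpace Ω :=
  ⨆ i : {i : ℤ // i ≤ m}, MeasurableSpace.comap (M.ε i.1) inferInstance

/-- The coefficients `f_{l,j}^{(n)}(v,w)`. -/
def ff (n : ℕ) (v w : ℕ → ℝ) (l j : ℕ) : ℝ :=
  if l = 0 then
    ∑ ν ∈ range (M.d n), ∑ μ ∈ range (M.d n), v ν * w μ * (M.c n j ν * M.c n j μ)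
  else
    ∑ ν ∈ range (M.d n), ∑ μ ∈ range (M.d n), v ν * w μ *
      (M.c n j ν * M.c n (j + l) μ + M.c n j μ * M.c n (j + l) ν)

/-- The tail coefficients `f̃_{l,i}^{(n)}(v,w) = Σ_{j ≥ i} f_{l,j}^{(n)}(v,w)`. -/
def ftil (n : ℕ) (v w : ℕ → ℝ) (l i : ℕ) : ℝ := ∑' j : ℕ, M.ff n v w l (i + j)

/-- The approximating martingales
`M_{m'}^{(n)}(v,w) = Σ_{k=0}^{m'} ( f̃_{0,0}(ε_k² − σ_k²) + ε_k Σ_{l≥1} f̃_{l,0} ε_{k−l} )`. -/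
def Mart (n : ℕ) (v w : ℕ → ℝ) (m' : ℕ) (ω : Ω) : ℝ :=
  ∑ k ∈ range (m' + 1),
    (M.ftil n v w 0 0 * ((M.ε (k : ℤ) ω) ^ 2 - M.σ2 (k : ℤ))
      + M.ε (k : ℤ) ω * ∑' l : ℕ, M.ftil n v w (l + 1) 0 * M.ε ((k : ℤ) - ((l : ℤ) + 1)) ω)

/-- The defining property (Ass5) of the asymptotic covariance parameter
`b = β_n²(v,w,v',w')` with constant `C`. -/
def BetaCond (n : ℕ) (v w v' w' : ℕ → ℝ) (b C : ℝ) : Prop :=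
  ∀ n' m' : ℕ, 1 ≤ n' →
    |M.ftil n v w 0 0 * M.ftil n v' w' 0 0 *
        ∑ j ∈ Icc 1 n', (M.γ4 ((m' + j : ℕ) : ℤ) - (M.σ2 ((m' + j : ℕ) : ℤ)) ^ 2)
      + ∑ j ∈ Icc 1 n', ∑ l ∈ Icc 1 (j - 1),
          M.ftil n v w (j - l) 0 * M.ftil n v' w' (j - l) 0 *
            (M.σ2 ((m' + j : ℕ) : ℤ) * M.σ2 ((m' + l : ℕ) : ℤ))
      - (n' : ℝ) * b| ≤ C * (n' : ℝ) ^ (1 - M.θ)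

/-- The defining property (Ass4) of the asymptotic variance parameter `a = α_n(v,w)`. -/
def AlphaCond (n : ℕ) (v w : ℕ → ℝ) (a C : ℝ) : Prop :=
  0 ≤ a ∧ M.BetaCond n v w v w (a ^ 2) C

/-- The standing assumptions on the model: probability space, independent mean-zero
innovations with uniformly bounded `(4+δ)`-moments and Cesàro-convergent moments of
order 2, 3, 4, and Assumption (A) on the coefficients with `0 < θ < 1/2`. -/
def IsValid : Prop :=
  IsProbabilityMeasure M.P ∧
  (∀ k, Measurable (M.ε k)) ∧
  iIndepFun M.ε M.P ∧
  (∀ k, ∫ ω, M.ε k ω ∂M.P = 0) ∧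
  0 < M.δ ∧
  (∃ K : ℝ, ∀ k, ∫ ω, |M.ε k ω| ^ ((4 : ℝ) + M.δ) ∂M.P ≤ K) ∧
  (∀ r ∈ ({2, 3, 4} : Set ℕ), ∃ Lr : ℝ,
    Tendsto (fun n : ℕ => (n : ℝ)⁻¹ * ∑ i ∈ range n, ∫ ω, (M.ε ((i : ℤ) + 1) ω) ^ r ∂M.P)
      atTop (nhds Lr)) ∧
  0 < M.θ ∧ M.θ < 1 / 2 ∧
  (∃ C : ℝ, ∀ n : ℕ, ∀ j : ℕ, 1 ≤ j → ∀ ν < M.d n,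
    |M.c n j ν| ^ 2 ≤ C * (j : ℝ) ^ (-(3 / 2 : ℝ) - M.θ))

/-- Entry `(ν,μ)` of the sample covariance matrix `Σ̂_n` (full sample). -/
def SigmaHatEntry (n : ℕ) (ν μ : ℕ) (ω : Ω) : ℝ :=
  (n : ℝ)⁻¹ * ∑ i ∈ Icc 1 n, M.Y n (i : ℤ) ν ω * M.Y n (i : ℤ) μ ω

/-- Entry `(ν,μ)` of `Σ_n = E Σ̂_n`. -/
def SigmaEntry (n : ℕ) (ν μ : ℕ) : ℝ := ∫ ω, M.SigmaHatEntry n ν μ ω ∂M.P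

/-- `μ̂_n = d_n⁻¹ tr(Σ̂_n)`. -/
def muHat (n : ℕ) (ω : Ω) : ℝ :=
  (M.d n : ℝ)⁻¹ * ∑ ν ∈ range (M.d n), M.SigmaHatEntry n ν ν ω

/-- `μ_n = d_n⁻¹ tr(Σ_n)`. -/
def mu0 (n : ℕ) : ℝ := (M.d n : ℝ)⁻¹ * ∑ ν ∈ range (M.d n), M.SigmaEntry n ν ν

/-- The bilinear form `v' Σ̂_n^s(W) w` of the shrinkage estimator. -/
def shrinkHatForm (n : ℕ) (v w : ℕ → ℝ) (Wt : ℝ) (ω : Ω) : ℝ :=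
  (1 - Wt) * ∑ ν ∈ range (M.d n), ∑ μ ∈ range (M.d n), v ν * w μ * M.SigmaHatEntry n ν μ ω
    + Wt * M.muHat n ω * ∑ ν ∈ range (M.d n), v ν * w ν

/-- The bilinear form `v' Σ_{n0}^s(W) w` of the shrunken true covariance matrix. -/
def shrinkOracleForm (n : ℕ) (v w : ℕ → ℝ) (Wt : ℝ) : ℝ :=
  (1 - Wt) * ∑ ν ∈ range (M.d n), ∑ μ ∈ range (M.d n), v ν * w μ * M.SigmaEntry n ν μ
    + Wt * M.mu0 n * ∑ ν ∈ range (M.d n), v ν * w ν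

/-- `A_n(W) = √n · v'(Σ̂_n^s(W) − Σ_{n0}^s(W))w`. -/
def Aform (n : ℕ) (v w : ℕ → ℝ) (Wt : ℝ) (ω : Ω) : ℝ :=
  Real.sqrt n * (M.shrinkHatForm n v w Wt ω - M.shrinkOracleForm n v w Wt)

/-- The MSE-optimal shrinkage weight
`W_n* = E‖Σ̂_n − Σ_n‖_F*² / E‖μ_n I − Σ̂_n‖_F*²`. -/
def Wopt (n : ℕ) : ℝ :=
  ((M.d n : ℝ)⁻¹ * ∑ ν ∈ range (M.d n), ∑ μ ∈ range (M.d n),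
      ∫ ω, (M.SigmaHatEntry n ν μ ω - M.SigmaEntry n ν μ) ^ 2 ∂M.P) /
  ((M.d n : ℝ)⁻¹ * ∑ ν ∈ range (M.d n), ∑ μ ∈ range (M.d n),
      ∫ ω, ((if ν = μ then M.mu0 n else 0) - M.SigmaHatEntry n ν μ ω) ^ 2 ∂M.P)

/-- The sequential sample covariance matrix `Σ̂_n(t) = n⁻¹ Σ_{i ≤ ⌊nt⌋} Y_{ni} Y_{ni}'`. -/
def SigmaHatMat (n : ℕ) (t : ℝ) (ω : Ω) : Matrix (Fin (M.d n)) (Fin (M.d n)) ℝ :=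
  Matrix.of fun ν μ =>
    (n : ℝ)⁻¹ * ∑ i ∈ Icc 1 ⌊(n : ℝ) * t⌋₊, M.Y n (i : ℤ) (ν : ℕ) ω * M.Y n (i : ℤ) (μ : ℕ) ω

/-- `Σ_n(t) = E Σ̂_n(t)`. -/
def SigmaMat (n : ℕ) (t : ℝ) : Matrix (Fin (M.d n)) (Fin (M.d n)) ℝ :=
  Matrix.of fun ν μ => ∫ ω, M.SigmaHatMat n t ω ν μ ∂M.P

/-- The scaled trace norm process
`T_n(t) = √n ( ‖Σ̂_n(t)‖_tr* − ‖Σ_n(t)‖_tr* )` (trace norm = trace for covariance matrices). -/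
def Ttrace (n : ℕ) (t : ℝ) (ω : Ω) : ℝ :=
  Real.sqrt n * ((M.d n : ℝ)⁻¹ * Matrix.trace (M.SigmaHatMat n t ω)
    - (M.d n : ℝ)⁻¹ * Matrix.trace (M.SigmaMat n t))

/-- Lag-`τ` cross-covariance `γ_n^{(i,j)}(τ) = Cov((Y_{n0}^{(i)})², (Y_{nτ}^{(j)})²)`. -/
def gammaCross (n : ℕ) (i j : ℕ) (τ : ℕ) : ℝ :=
  ∫ ω, (M.Y n 0 i ω) ^ 2 * (M.Y n (τ : ℤ) j ω) ^ 2 ∂M.P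
    - (∫ ω, (M.Y n 0 i ω) ^ 2 ∂M.P) * (∫ ω, (M.Y n (τ : ℤ) j ω) ^ 2 ∂M.P)

/-- `μ̂_n(i) = n⁻¹ Σ_{k=1}^n Y_k(e_i)²`. -/
def muHatSq (n : ℕ) (i : ℕ) (ω : Ω) : ℝ :=
  (n : ℝ)⁻¹ * ∑ k ∈ Icc 1 n, (M.Y n (k : ℤ) i ω) ^ 2

/-- The sample lag-`τ` cross-covariance `γ̂_n^{(i,j)}(τ)`. -/
def gammaHat (n : ℕ) (i j : ℕ) (τ : ℕ) (ω : Ω) : ℝ :=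
  (n : ℝ)⁻¹ * ∑ k ∈ Icc 1 (n - τ),
    ((M.Y n (k : ℤ) i ω) ^ 2 - M.muHatSq n i ω) *
      ((M.Y n ((k : ℤ) + (τ : ℤ)) j ω) ^ 2 - M.muHatSq n j ω)

/-- The lag-window estimator `β̂_n²(i,j)`. -/
def betaHat (wwin : ℕ → ℕ → ℝ) (mlag : ℕ) (n i j : ℕ) (ω : Ω) : ℝ :=
  M.gammaHat n i j 0 ω + 2 * ∑ τ ∈ Icc 1 mlag, wwin mlag τ * M.gammaHat n i j τ ω

/-- The estimator `σ̂²_{tr,n} = d_n⁻² Σ_{i,j} β̂_n²(i,j)`. -/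
def sigmaHatTr (wwin : ℕ → ℕ → ℝ) (mlag : ℕ) (n : ℕ) (ω : Ω) : ℝ :=
  ((M.d n : ℝ) ^ 2)⁻¹ * ∑ i ∈ range (M.d n), ∑ j ∈ range (M.d n),
    M.betaHat wwin mlag n i j ω

end Model

/-- A family of weighting vectors with uniformly bounded ℓ1-norm. -/
def L1Bdd (M : Model Ω) (v : ℕ → ℕ → ℝ) : Prop :=
  ∃ C : ℝ, ∀ n, ∑ ν ∈ range (M.d n), |v n ν| ≤ C

/-- `L_n`-indexed families of weighting vectors with uniformly bounded ℓ1-norm. -/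
def L1BddFam (M : Model Ω) (L : ℕ → ℕ) (v : ℕ → ℕ → ℕ → ℝ) : Prop :=
  ∃ C : ℝ, ∀ n, ∀ j < L n, ∑ ν ∈ range (M.d n), |v n j ν| ≤ C

/-- `M'` is an (equally distributed) version of the model `M` on a new probability space. -/
def EquivModel {Ω' : Type} [MeasurableSpace Ω'] (M : Model Ω) (M' : Model Ω') : Prop :=
  M'.d = M.d ∧ M'.c = M.c ∧ M'.θ = M.θ ∧ M'.δ = M.δ ∧
    M'.P.map (fun ω (k : ℤ) => M'.ε k ω) = M.P.map (fun ω (k : ℤ) => M.ε k ω)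

/-- A standard Brownian motion on `[0,∞)`. -/
def IsStdBM (P : Measure Ω) (W : ℝ → Ω → ℝ) : Prop :=
  (∀ᵐ ω ∂P, W 0 ω = 0) ∧
  (∀ᵐ ω ∂P, Continuous fun t => W t ω) ∧
  (∀ s t : ℝ, 0 ≤ s → s ≤ t →
    P.map (fun ω => W t ω - W s ω) = gaussianReal 0 (Real.toNNReal (t - s))) ∧
  (∀ (m : ℕ) (u : ℕ → ℝ), Monotone u → (∀ i, 0 ≤ u i) →
    iIndepFun
      (fun (i : Fin m) (ω : Ω) => W (u ((i : ℕ) + 1)) ω - W (u (i : ℕ)) ω) P)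

/-- A centered Brownian motion with variance parameter `a`, i.e. `Cov(W_s,W_t) = min(s,t)·a`. -/
def IsBMVar (P : Measure Ω) (W : ℝ → Ω → ℝ) (a : ℝ) : Prop :=
  (∀ᵐ ω ∂P, W 0 ω = 0) ∧
  (∀ᵐ ω ∂P, Continuous fun t => W t ω) ∧
  (∀ s t : ℝ, 0 ≤ s → 0 ≤ t → ∫ ω, W s ω * W t ω ∂P = min s t * a) ∧
  (∀ s t : ℝ, 0 ≤ s → s ≤ t →
    P.map (fun ω => W t ω - W s ω) = gaussianReal 0 (Real.toNNReal ((t - s) * a))) ∧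
  (∀ (m : ℕ) (u : ℕ → ℝ), Monotone u → (∀ i, 0 ≤ u i) →
    iIndepFun
      (fun (i : Fin m) (ω : Ω) => W (u ((i : ℕ) + 1)) ω - W (u (i : ℕ)) ω) P)

/-- An `L`-dimensional centered Brownian motion with covariance function
`E(B_s^i B_t^j) = min(s,t) Γ i j`. -/
def IsBMCov (P : Measure Ω) (L : ℕ) (B : ℝ → Ω → Fin L → ℝ) (Γ : Fin L → Fin L → ℝ) : Prop :=
  (∀ᵐ ω ∂P, ∀ j, B 0 ω j = 0) ∧
  (∀ᵐ ω ∂P, ∀ j, Continuous fun t => B t ω j) ∧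
  (∀ s t : ℝ, 0 ≤ s → 0 ≤ t → ∀ i j, ∫ ω, B s ω i * B t ω j ∂P = min s t * Γ i j) ∧
  (∀ (a : Fin L → ℝ) (s t : ℝ), 0 ≤ s → s ≤ t →
    P.map (fun ω => ∑ i, a i * (B t ω i - B s ω i)) =
      gaussianReal 0 (Real.toNNReal ((t - s) * ∑ i, ∑ j, a i * a j * Γ i j))) ∧
  (∀ (m : ℕ) (u : ℕ → ℝ), Monotone u → (∀ i, 0 ≤ u i) →
    iIndepFun
      (fun (i : Fin m) (ω : Ω) => fun j => B (u ((i : ℕ) + 1)) ω j - B (u (i : ℕ)) ω j) P)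

/-- The strong approximation (i) of Theorem 2.3 in `R^{L_n}`:
`‖L_n^{-1/2} D_{nt} − B_n(t)‖ ≤ C_n t^{1/2−λ_n}` for all `t`, a.s. -/
def StrongApproxGen {Ω' : Type} [MeasurableSpace Ω'] (P : Measure Ω') (d : ℕ → ℕ)
    (Yg : ℕ → ℤ → ℕ → Ω' → ℝ) (L : ℕ → ℕ) (v w : ℕ → ℕ → ℕ → ℝ)
    (B : (n : ℕ) → ℝ → Ω' → Fin (L n) → ℝ) (C lam : ℕ → ℝ) : Prop :=
  ∀ n, 0 < lam n ∧ ∀ᵐ ω ∂P, ∀ t : ℕ,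
    Real.sqrt (∑ j : Fin (L n),
        ((L n : ℝ) ^ (-(1 / 2 : ℝ)) * Dgen P d Yg n (v n (j : ℕ)) (w n (j : ℕ)) t ω
          - B n (t : ℝ) ω j) ^ 2)
      ≤ C n * (t : ℝ) ^ ((1 : ℝ) / 2 - lam n)

/-- The condition `C_n n^{−λ_n} = o(1)` (condition (CrucialCond) of the paper). -/
def CrucialCond (C lam : ℕ → ℝ) : Prop :=
  Tendsto (fun n : ℕ => C n * (n : ℝ) ^ (-(lam n))) atTop (nhds 0)

/-- The construction of the multivariate strong approximation theorem together with the
condition `C_n n^{−λ_n} = o(1)` on its constants. -/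
def CrucialHolds (M : Model Ω) (L : ℕ → ℕ) (v w : ℕ → ℕ → ℕ → ℝ)
    (β : ℕ → ℕ → ℕ → ℝ) : Prop :=
  ∃ (Ω' : Type) (_ : MeasurableSpace Ω') (M' : Model Ω')
    (B : (n : ℕ) → ℝ → Ω' → Fin (L n) → ℝ) (C lam : ℕ → ℝ),
    EquivModel M M' ∧ M'.IsValid ∧
    (∀ n, IsBMCov M'.P (L n) (B n) (fun j k => (L n : ℝ)⁻¹ * β n (j : ℕ) (k : ℕ))) ∧
    StrongApproxGen M'.P M'.d M'.Y L v w B C lam ∧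
    CrucialCond C lam

/-- The combined covariance parameters of the shrinkage system
`(v,w), (e_0,e_0), …, (e_{d−1},e_{d−1})`. -/
def betaSys (α : ℕ → ℝ) (βvw : ℕ → ℕ → ℝ) (βee : ℕ → ℕ → ℕ → ℝ) (n a b : ℕ) : ℝ :=
  if a = 0 then (if b = 0 then (α n) ^ 2 else βvw n (b - 1))
  else if b = 0 then βvw n (a - 1) else βee n (a - 1) (b - 1)

/-- The approximating Gaussian functional of the shrinkage estimator:
`B_n(W) = (1−W) B̄_n(1)_0 + W (v'w) d_n^{-1/2} Σ_{j=1}^{d_n} B̄_n(1)_j`. -/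
def calBgen {Ω' : Type} (dn : ℕ) (vw : ℝ) (B : ℝ → Ω' → Fin (dn + 1) → ℝ)
    (Wt : ℝ) (ω : Ω') : ℝ :=
  (1 - Wt) * B 1 ω 0 + Wt * vw * (dn : ℝ) ^ (-(1 / 2 : ℝ)) * ∑ j : Fin dn, B 1 ω j.succ

end SvS


namespace SvS2

open Finset

private def symOf {d k : ℕ} (f : Fin k → Fin d) : Sym (Fin d) k :=
  ⟨Multiset.map f Finset.univ.val, by simp⟩

private def cnt {d k : ℕ} (μ : Sym (Fin d) k) : ℕ :=
  (Finset.univ.filter (fun f : Fin k → Fin d => symOf f = μ)).card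

private def prodS {d k : ℕ} (v : Fin d → ℝ) (μ : Sym (Fin d) k) : ℝ :=
  (μ.1.map v).prod

private lemma prodS_symOf {d k : ℕ} (v : Fin d → ℝ) (f : Fin k → Fin d) :
    prodS v (symOf f) = ∏ j, v (f j) := by
  simp only [prodS, symOf, Multiset.map_map]
  rfl

private lemma sum_cnt_mul (d k : ℕ) (v w : Fin d → ℝ) :
    ∑ μ : Sym (Fin d) k, (cnt μ : ℝ) * (prodS v μ * prodS w μ) = (∑ ν, v ν * w ν) ^ k := by
  rw [Fintype.sum_pow]
  have h1 : ∀ p : Fin k → Fin d, (∏ j, (v (p j) * w (p j)))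
      = prodS v (symOf p) * prodS w (symOf p) := by
    intro p; rw [Finset.prod_mul_distrib, prodS_symOf, prodS_symOf]
  rw [Finset.sum_congr rfl fun p _ => h1 p]
  rw [← Finset.sum_fiberwise' Finset.univ symOf (fun μ => prodS v μ * prodS w μ)]
  refine Finset.sum_congr rfl fun μ _ => ?_
  rw [Finset.sum_const, cnt, nsmul_eq_mul]

private lemma swap_sums {m : ℕ} {ι : Type*} [Fintype ι] (F : ι → ι → Fin m → Fin m → ℝ) :
    ∑ μ : ι, ∑ ν : ι, ∑ i, ∑ j, F μ ν i j = ∑ i, ∑ j, ∑ μ : ι, ∑ ν : ι, F μ ν i j := by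
  calc ∑ μ : ι, ∑ ν : ι, ∑ i, ∑ j, F μ ν i j
      = ∑ μ : ι, ∑ i, ∑ ν : ι, ∑ j, F μ ν i j :=
        Finset.sum_congr rfl fun μ _ => Finset.sum_comm
    _ = ∑ i, ∑ μ : ι, ∑ ν : ι, ∑ j, F μ ν i j := Finset.sum_comm
    _ = ∑ i, ∑ j, ∑ μ : ι, ∑ ν : ι, F μ ν i j := by
        refine Finset.sum_congr rfl fun i _ => ?_
        calc ∑ μ : ι, ∑ ν : ι, ∑ j, F μ ν i j
            = ∑ μ : ι, ∑ j, ∑ ν : ι, F μ ν i j :=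
              Finset.sum_congr rfl fun μ _ => Finset.sum_comm
          _ = ∑ j, ∑ μ : ι, ∑ ν : ι, F μ ν i j := Finset.sum_comm

private lemma gram_rank_bound {m : ℕ} {ι : Type*} [Fintype ι] (Z : Fin m → ι → ℝ)
    (h1 : ∀ i, ∑ μ, Z i μ * Z i μ = 1) :
    (m : ℝ) ^ 2 ≤ (Fintype.card ι : ℝ) * ∑ i, ∑ j, (∑ μ, Z i μ * Z j μ) ^ 2 := by
  have hm : (m : ℝ) = ∑ μ : ι, ∑ i, Z i μ * Z i μ := by
    rw [Finset.sum_comm]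
    simp [h1]
  have step1 : (m : ℝ) ^ 2 ≤ (Fintype.card ι : ℝ) * ∑ μ : ι, (∑ i, Z i μ * Z i μ) ^ 2 := by
    rw [hm]
    simpa using sq_sum_le_card_mul_sum_sq
      (s := (Finset.univ : Finset ι)) (f := fun μ => ∑ i, Z i μ * Z i μ)
  have step2 : ∑ μ : ι, (∑ i, Z i μ * Z i μ) ^ 2 ≤ ∑ μ : ι, ∑ ν : ι, (∑ i, Z i μ * Z i ν) ^ 2 :=
    Finset.sum_le_sum fun μ _ =>
      Finset.single_le_sum (f := fun ν => (∑ i, Z i μ * Z i ν) ^ 2)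
        (fun ν _ => sq_nonneg _) (Finset.mem_univ μ)
  have step3 : ∑ μ : ι, ∑ ν : ι, (∑ i, Z i μ * Z i ν) ^ 2
      = ∑ i, ∑ j, (∑ μ, Z i μ * Z j μ) ^ 2 := by
    simp only [sq, Finset.sum_mul_sum]
    rw [swap_sums (fun μ ν i j => (Z i μ * Z i ν) * (Z j μ * Z j ν))]
    exact Finset.sum_congr rfl fun i _ => Finset.sum_congr rfl fun j _ =>
      Finset.sum_congr rfl fun μ _ => Finset.sum_congr rfl fun ν _ => by ring
  have hc : (0:ℝ) ≤ (Fintype.card ι : ℝ) := Nat.cast_nonneg _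
  calc (m:ℝ)^2 ≤ (Fintype.card ι : ℝ) * ∑ μ : ι, (∑ i, Z i μ * Z i μ) ^ 2 := step1
    _ ≤ (Fintype.card ι : ℝ) * ∑ μ : ι, ∑ ν : ι, (∑ i, Z i μ * Z i ν) ^ 2 :=
        mul_le_mul_of_nonneg_left step2 hc
    _ = _ := by rw [step3]

private lemma pow_le_three_pow_mul_factorial (k : ℕ) :
    (k : ℝ) ^ k ≤ 3 ^ k * (k.factorial : ℝ) := by
  induction k with
  | zero => simp
  | succ n ih =>
    rcases Nat.eq_zero_or_pos n with h | h
    · subst h; norm_num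
    have hn : (0:ℝ) < n := by exact_mod_cast h
    have hexp : ((n:ℝ) + 1) ≤ (n:ℝ) * Real.exp (1 / n) := by
      have h2 := Real.add_one_le_exp (1 / (n:ℝ))
      have hm : (n:ℝ) * (1/n + 1) ≤ (n:ℝ) * Real.exp (1/n) :=
        mul_le_mul_of_nonneg_left h2 hn.le
      calc ((n:ℝ) + 1) = (n:ℝ) * (1/n + 1) := by field_simp; ring
        _ ≤ _ := hm
    have h1 : ((n:ℝ) + 1) ^ n ≤ 3 * (n:ℝ) ^ n := by
      calc ((n:ℝ) + 1) ^ n ≤ ((n:ℝ) * Real.exp (1/n)) ^ n :=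
            pow_le_pow_left₀ (by positivity) hexp n
        _ = (n:ℝ)^n * Real.exp (1/n) ^ n := mul_pow _ _ _
        _ = (n:ℝ)^n * Real.exp ((n : ℕ) * (1/n)) := by rw [Real.exp_nat_mul]
        _ = (n:ℝ)^n * Real.exp 1 := by
            congr 1; congr 1; field_simp
        _ ≤ 3 * (n:ℝ)^n := by
            nlinarith [Real.exp_one_lt_d9, pow_nonneg hn.le n, pow_pos hn n]
    have hfac : (0:ℝ) ≤ (n.factorial : ℝ) := Nat.cast_nonneg _
    have h3 : (0:ℝ) < 3 ^ n := by positivity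
    calc ((n+1 : ℕ) : ℝ) ^ (n+1) = ((n:ℝ)+1) * ((n:ℝ)+1)^n := by push_cast; ring
      _ ≤ ((n:ℝ)+1) * (3 * (n:ℝ)^n) := by
          have := mul_le_mul_of_nonneg_left h1 (by positivity : (0:ℝ) ≤ (n:ℝ)+1)
          linarith
      _ ≤ ((n:ℝ)+1) * (3 * (3^n * n.factorial)) := by
          have hh := mul_le_mul_of_nonneg_left ih (by norm_num : (0:ℝ) ≤ 3)
          nlinarith
      _ = 3 ^ (n+1) * ((n+1).factorial : ℝ) := by
          rw [Nat.factorial_succ]; push_cast; ring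

set_option maxHeartbeats 2000000 in
theorem statement17' :
    ∃ C : ℝ, 0 < C ∧ ∀ (d m : ℕ) (A : ℝ) (x : Fin m → EuclideanSpace ℝ (Fin d)),
      (∀ i, ‖x i‖ = 1) →
      (∀ i j, i ≠ j → |(inner ℝ (x i) (x j) : ℝ)| ≤ A * (d : ℝ) ^ (-(1 / 2 : ℝ))) →
      1 / 2 ≤ A → A ≤ (1 / 2) * Real.sqrt d →
      (m : ℝ) ≤ (C * (d : ℝ) / A ^ 2) ^ (C * A ^ 2) := by
  refine ⟨52, by norm_num, ?_⟩
  intro d m A x hnorm hinner hA1 hA2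
  have hApos : (0:ℝ) < A := lt_of_lt_of_le (by norm_num) hA1
  have hA2pos : (0:ℝ) < A ^ 2 := by positivity
  have hA41 : (1:ℝ)/4 ≤ A ^ 2 := by nlinarith
  have hdpos : (0:ℝ) < (d:ℝ) := by
    rcases Nat.eq_zero_or_pos d with h | h
    · exfalso
      rw [h] at hA2
      simp at hA2
      nlinarith
    · exact_mod_cast h
  have hA4d : A ^ 2 ≤ (d:ℝ)/4 := by
    have h2 : A ^ 2 ≤ ((1/2) * Real.sqrt d) ^ 2 := by
      apply pow_le_pow_left₀ hApos.le hA2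
    rw [mul_pow, Real.sq_sqrt hdpos.le] at h2
    nlinarith
  set t : ℝ := (d:ℝ) / A ^ 2 with ht
  have htpos : (0:ℝ) < t := by positivity
  have ht4 : (4:ℝ) ≤ t := by
    rw [ht, le_div_iff₀ hA2pos]; nlinarith
  set k : ℕ := ⌈48 * A ^ 2⌉₊ with hk
  have hk48 : 48 * A ^ 2 ≤ (k:ℝ) := Nat.le_ceil _
  have hk52 : (k:ℝ) ≤ 52 * A ^ 2 := by
    have := Nat.ceil_lt_add_one (show (0:ℝ) ≤ 48 * A ^ 2 by positivity)
    rw [← hk] at this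
    nlinarith
  have hk12 : 12 ≤ k := by
    have h12 : (12:ℝ) ≤ (k:ℝ) := by nlinarith
    exact_mod_cast h12
  have hkposR : (0:ℝ) < (k:ℝ) := by nlinarith
  have hinner_eq : ∀ i j, (inner ℝ (x i) (x j) : ℝ) = ∑ ν, x i ν * x j ν := by
    intro i j
    simp [PiLp.inner_apply, RCLike.inner_apply, starRingEnd_apply, mul_comm]
  have hii : ∀ i, (inner ℝ (x i) (x i) : ℝ) = 1 := by
    intro i
    rw [real_inner_self_eq_norm_mul_norm, hnorm i, one_mul]
  have hij : ∀ i j, i ≠ j → ((inner ℝ (x i) (x j) : ℝ)) ^ 2 ≤ A ^ 2 / d := by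
    intro i j hij
    have h1 := hinner i j hij
    have h2 : ((inner ℝ (x i) (x j) : ℝ)) ^ 2 ≤ (A * (d:ℝ) ^ (-(1/2 : ℝ))) ^ 2 := by
      rw [← sq_abs]
      exact pow_le_pow_left₀ (abs_nonneg _) h1 2
    have h3 : (A * (d:ℝ) ^ (-(1/2 : ℝ))) ^ 2 = A ^ 2 / d := by
      rw [mul_pow, ← Real.rpow_natCast ((d:ℝ) ^ (-(1/2 : ℝ))) 2, ← Real.rpow_mul hdpos.le]
      norm_num
      rw [Real.rpow_neg_one]
      field_simp
    rw [h3] at h2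
    exact h2
  -- the matrix of symmetric tensor powers
  set D : ℝ := (Fintype.card (Sym (Fin d) k) : ℝ) with hD
  have hDnonneg : (0:ℝ) ≤ D := Nat.cast_nonneg _
  set Z : Fin m → Sym (Fin d) k → ℝ :=
    fun i μ => Real.sqrt (cnt μ) * prodS (fun ν => x i ν) μ with hZdef
  have hZZ : ∀ i j, ∑ μ, Z i μ * Z j μ = ((inner ℝ (x i) (x j) : ℝ)) ^ k := by
    intro i j
    rw [hinner_eq, ← sum_cnt_mul d k]
    refine Finset.sum_congr rfl fun μ _ => ?_
    have hs : Real.sqrt (cnt μ) * Real.sqrt (cnt μ) = (cnt μ : ℝ) :=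
      Real.mul_self_sqrt (Nat.cast_nonneg _)
    simp only [hZdef]
    calc (Real.sqrt (cnt μ) * prodS (fun ν => x i ν) μ)
          * (Real.sqrt (cnt μ) * prodS (fun ν => x j ν) μ)
        = (Real.sqrt (cnt μ) * Real.sqrt (cnt μ))
          * (prodS (fun ν => x i ν) μ * prodS (fun ν => x j ν) μ) := by ring
      _ = (cnt μ : ℝ) * (prodS (fun ν => x i ν) μ * prodS (fun ν => x j ν) μ) := by rw [hs]
  have hZ1 : ∀ i, ∑ μ, Z i μ * Z i μ = 1 := by
    intro i; rw [hZZ i i, hii i, one_pow]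
  have key := gram_rank_bound Z hZ1
  have hsum : ∑ i, ∑ j, (∑ μ, Z i μ * Z j μ) ^ 2 ≤ (m:ℝ) + (m:ℝ)^2 * (A^2/d)^k := by
    have hbd : ∀ i j : Fin m, (∑ μ, Z i μ * Z j μ) ^ 2
        ≤ (if i = j then (1:ℝ) else 0) + (A^2/d)^k := by
      intro i j
      rw [hZZ]
      by_cases h : i = j
      · subst h; rw [hii, one_pow, one_pow, if_pos rfl]
        have : (0:ℝ) ≤ (A^2/d)^k := by positivity
        linarith
      · rw [if_neg h]
        have h1 : ((inner ℝ (x i) (x j) : ℝ) ^ k) ^ 2 = ((inner ℝ (x i) (x j) : ℝ) ^ 2) ^ k := by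
          rw [← pow_mul, ← pow_mul, Nat.mul_comm]
        rw [h1]
        have := pow_le_pow_left₀ (sq_nonneg _) (hij i j h) k
        linarith
    calc ∑ i, ∑ j, (∑ μ, Z i μ * Z j μ) ^ 2
        ≤ ∑ i : Fin m, ∑ j : Fin m, ((if i = j then (1:ℝ) else 0) + (A^2/d)^k) :=
          Finset.sum_le_sum fun i _ => Finset.sum_le_sum fun j _ => hbd i j
      _ = ∑ _i : Fin m, (1 + (m:ℝ) * (A^2/d)^k) := by
          refine Finset.sum_congr rfl fun i _ => ?_
          rw [Finset.sum_add_distrib, Finset.sum_const, Finset.card_univ, Fintype.card_fin,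
            nsmul_eq_mul]
          congr 1
          simp
      _ = (m:ℝ) + (m:ℝ)^2 * (A^2/d)^k := by
          rw [Finset.sum_const, Finset.card_univ, Fintype.card_fin, nsmul_eq_mul]; ring
  have hD1 : D * (k.factorial : ℝ) ≤ ((d:ℝ) + k) ^ k := by
    have hcard : Fintype.card (Sym (Fin d) k) = (d + k - 1).choose k := by
      rw [Sym.card_sym_eq_choose, Fintype.card_fin]
    have hnat : (d + k - 1).choose k * k.factorial ≤ (d + k) ^ k := by
      calc (d + k - 1).choose k * k.factorial = (d + k - 1).descFactorial k := by
            rw [Nat.descFactorial_eq_factorial_mul_choose]; ring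
        _ ≤ (d + k - 1) ^ k := Nat.descFactorial_le_pow _ _
        _ ≤ (d + k) ^ k := Nat.pow_le_pow_left (Nat.sub_le _ _) k
    rw [hD, hcard]
    calc ((d + k - 1).choose k : ℝ) * (k.factorial : ℝ)
        = (((d + k - 1).choose k * k.factorial : ℕ) : ℝ) := by push_cast; ring
      _ ≤ (((d + k) ^ k : ℕ) : ℝ) := by exact_mod_cast hnat
      _ = ((d:ℝ) + k) ^ k := by push_cast; ring
  have hkk := pow_le_three_pow_mul_factorial k
  have hDk : D * (k:ℝ)^k ≤ (3 * ((d:ℝ) + k)) ^ k := by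
    calc D * (k:ℝ)^k ≤ D * (3^k * k.factorial) := mul_le_mul_of_nonneg_left hkk hDnonneg
      _ = 3^k * (D * k.factorial) := by ring
      _ ≤ 3^k * ((d:ℝ)+k)^k := by
          apply mul_le_mul_of_nonneg_left hD1 (by positivity)
      _ = (3 * ((d:ℝ)+k))^k := by rw [mul_pow]
  have hbase : 3 * ((d:ℝ) + k) / (k:ℝ) ≤ (13/16) * t := by
    have h1 : 3 * (d:ℝ) / k ≤ t / 16 := by
      rw [div_le_div_iff₀ hkposR (by norm_num)]
      have hmul : t * (48 * A^2) ≤ t * k := mul_le_mul_of_nonneg_left hk48 htpos.le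
      have ht48 : t * (48 * A^2) = 48 * (d:ℝ) := by rw [ht]; field_simp
      nlinarith
    have h2 : (3:ℝ) ≤ (3/4) * t := by nlinarith
    have h3 : 3 * ((d:ℝ) + k) / k = 3*(d:ℝ)/k + 3 := by field_simp
    rw [h3]; nlinarith
  have hDle : D ≤ (1/8) * t ^ k := by
    have hkkpos : (0:ℝ) < (k:ℝ)^k := by positivity
    have hD2 : D ≤ (3 * ((d:ℝ)+k) / k) ^ k := by
      rw [div_pow, le_div_iff₀ hkkpos]
      exact hDk
    have hD3 : (3 * ((d:ℝ)+k) / k) ^ k ≤ ((13/16) * t) ^ k :=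
      pow_le_pow_left₀ (by positivity) hbase k
    have hD4 : ((13/16) * t) ^ k = (13/16:ℝ)^k * t^k := mul_pow _ _ _
    have hD5 : (13/16:ℝ)^k ≤ (13/16:ℝ)^12 :=
      pow_le_pow_of_le_one (by norm_num) (by norm_num) hk12
    have hD6 : (13/16:ℝ)^12 ≤ 1/8 := by norm_num
    have htk : (0:ℝ) ≤ t^k := by positivity
    calc D ≤ (3 * ((d:ℝ)+k) / k) ^ k := hD2
      _ ≤ (13/16:ℝ)^k * t^k := by rw [← hD4]; exact hD3
      _ ≤ (1/8) * t^k := by nlinarith [mul_le_mul_of_nonneg_right (hD5.trans hD6) htk]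
  have hAdt : (A^2/(d:ℝ))^k = 1 / t^k := by
    rw [ht, one_div, ← inv_pow, inv_div]
  have hDs : D * (A^2/(d:ℝ))^k ≤ 1/2 := by
    rw [hAdt]
    have htkpos : (0:ℝ) < t^k := by positivity
    calc D * (1/t^k) ≤ ((1/8)*t^k) * (1/t^k) := by
          apply mul_le_mul_of_nonneg_right hDle (by positivity)
      _ = 1/8 := by field_simp
      _ ≤ 1/2 := by norm_num
  have hfinal : (m:ℝ) ≤ 2 * D := by
    have h1 : (m:ℝ)^2 ≤ D * ((m:ℝ) + (m:ℝ)^2 * (A^2/d)^k) :=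
      le_trans key (mul_le_mul_of_nonneg_left hsum hDnonneg)
    have h2 : D * ((m:ℝ)^2 * (A^2/d)^k) ≤ (m:ℝ)^2 * (1/2) := by
      have hh := mul_le_mul_of_nonneg_right hDs (sq_nonneg (m:ℝ))
      calc D * ((m:ℝ)^2 * (A^2/d)^k) = (D * (A^2/d)^k) * (m:ℝ)^2 := by ring
        _ ≤ (1/2) * (m:ℝ)^2 := hh
        _ = (m:ℝ)^2 * (1/2) := by ring
    have h3 : (m:ℝ)^2 ≤ D * m + (m:ℝ)^2 * (1/2) := by nlinarith
    rcases Nat.eq_zero_or_pos m with hm | hm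
    · rw [hm]; push_cast; linarith
    · have hmpos : (0:ℝ) < m := by exact_mod_cast hm
      nlinarith
  have htk : (0:ℝ) ≤ t^k := by positivity
  have h2D : 2 * D ≤ t ^ k := by nlinarith
  have hfin2 : (m:ℝ) ≤ t ^ k := le_trans hfinal h2D
  have ht1 : (1:ℝ) ≤ t := by linarith
  calc (m:ℝ) ≤ t ^ k := hfin2
    _ = t ^ (k:ℝ) := (Real.rpow_natCast t k).symm
    _ ≤ t ^ (52 * A^2) := Real.rpow_le_rpow_of_exponent_le ht1 hk52
    _ ≤ (52 * (d:ℝ) / A^2) ^ (52 * A^2) := by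
        apply Real.rpow_le_rpow htpos.le _ (by positivity)
        rw [ht]
        calc (d:ℝ)/A^2 ≤ 52 * ((d:ℝ)/A^2) := by nlinarith
          _ = 52 * (d:ℝ) / A^2 := by ring

end SvS2


namespace SvS

variable {Ω : Type} [MeasurableSpace Ω]

/-- cheap version of the Kabatjanskii–Levenstein bound (Theorem 4.6). -/
theorem statement17 :
    ∃ C : ℝ, 0 < C ∧ ∀ (d m : ℕ) (A : ℝ) (x : Fin m → EuclideanSpace ℝ (Fin d)),
      (∀ i, ‖x i‖ = 1) →
      (∀ i j, i ≠ j → |(inner ℝ (x i) (x j) : ℝ)| ≤ A * (d : ℝ) ^ (-(1 / 2 : ℝ))) →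
      1 / 2 ≤ A → A ≤ (1 / 2) * Real.sqrt d →
      (m : ℝ) ≤ (C * (d : ℝ) / A ^ 2) ^ (C * A ^ 2) :=
  SvS2.statement17'

end SvS
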